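/- Let g : ℝ → ℝ be a function satisfying the Lipschitz condition |g(μ) - g(μ')| ≤ L|μ - μ'| for all μ, μ' (L ≥ 0), and the bounds g(μ) ≥ g(0) + c₊ μ for μ ≥ 0 and g(μ) ≥ g(0) + c₋ μ for μ ≤ 0, with -L ≤ c₋, c₊ ≤ L. Suppose g(0) > 0 and there exists μ₁ > 0 with g(μ₁) < 0. Then there is α₀ > 0 such that for every α > α₀ the equation g(μ) = -(μ/α)² has at least two solutions in (0, ∞). -/
import Mathlib


/-- if `g` is `L`-Lipschitz, satisfies the one-sided linear lower
bounds `g(μ) ≥ g(0) + c₊μ` (`μ ≥ 0`) and `g(μ) ≥ g(0) + c₋μ` (`μ ≤ 0`) with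
`-L ≤ c₋, c₊ ≤ L`, `g(0) > 0`, and `g(μ₁) < 0` for some `μ₁ > 0`, then there is
`α₀ > 0` such that for every `α > α₀` the equation `g(μ) = -(μ/α)²` has at
least two solutions in `(0, ∞)`. -/
theorem stmt17 (g : ℝ → ℝ) (L cm cp : ℝ) (hL : 0 ≤ L)
    (hlip : ∀ μ μ' : ℝ, |g μ - g μ'| ≤ L * |μ - μ'|)
    (hlbp : ∀ μ ≥ (0 : ℝ), g 0 + cp * μ ≤ g μ)
    (hlbm : ∀ μ ≤ (0 : ℝ), g 0 + cm * μ ≤ g μ)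
    (hcm : -L ≤ cm ∧ cm ≤ L) (hcp : -L ≤ cp ∧ cp ≤ L)
    (h0 : 0 < g 0) (μ₁ : ℝ) (hμ₁ : 0 < μ₁) (hneg : g μ₁ < 0) :
    ∃ α₀ > (0 : ℝ), ∀ α > α₀, ∃ ν₁ ν₂ : ℝ, 0 < ν₁ ∧ 0 < ν₂ ∧ ν₁ ≠ ν₂ ∧
      g ν₁ = -(ν₁ / α) ^ 2 ∧ g ν₂ = -(ν₂ / α) ^ 2 := by
  -- g is continuous
  have hgcont : Continuous g := by
    have : LipschitzWith (Real.toNNReal L) g := by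
      apply LipschitzWith.of_dist_le_mul
      intro x y
      simpa [Real.dist_eq, Real.coe_toNNReal L hL] using hlip x y
    exact this.continuous
  have hsq : 0 < -g μ₁ := by linarith
  refine ⟨μ₁ / Real.sqrt (-g μ₁), div_pos hμ₁ (Real.sqrt_pos.mpr hsq), ?_⟩
  intro α hα
  have hα0 : 0 < α := lt_trans (div_pos hμ₁ (Real.sqrt_pos.mpr hsq)) hα
  set h : ℝ → ℝ := fun μ => g μ + (μ / α) ^ 2 with hh
  have hcont : Continuous h := by
    apply hgcont.add
    continuity
  have hh0 : 0 < h 0 := by simp [hh]; positivity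
  -- h μ₁ < 0
  have hhμ₁ : h μ₁ < 0 := by
    have h1 : μ₁ / α < Real.sqrt (-g μ₁) := by
      rw [div_lt_iff₀ hα0]
      calc μ₁ = μ₁ / Real.sqrt (-g μ₁) * Real.sqrt (-g μ₁) := by
              field_simp
        _ < Real.sqrt (-g μ₁) * α := by
              rw [mul_comm (Real.sqrt (-g μ₁)) α]
              exact mul_lt_mul_of_pos_right hα (Real.sqrt_pos.mpr hsq)
    have h2 : (μ₁ / α) ^ 2 < -g μ₁ := by
      have := mul_self_lt_mul_self (by positivity) h1
      rw [Real.mul_self_sqrt hsq.le] at this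
      nlinarith
    simp only [hh]
    linarith
  -- large M with h M > 0
  set M : ℝ := max (α ^ 2 * (L + 1)) (max (μ₁ + 1) (1 - g μ₁)) with hM
  have hMμ₁ : μ₁ < M := lt_of_lt_of_le (by linarith) (le_trans (le_max_left _ _) (le_max_right _ _))
  have hM0 : 0 < M := lt_trans hμ₁ hMμ₁
  have hM1 : α ^ 2 * (L + 1) ≤ M := le_max_left _ _
  have hM2 : 1 - g μ₁ ≤ M := le_trans (le_max_right _ _) (le_max_right _ _)
  have hgM : g μ₁ - L * M ≤ g M := by
    have := hlip M μ₁
    have habs : |g M - g μ₁| ≤ L * (M - μ₁) := by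
      have h3 : |M - μ₁| = M - μ₁ := abs_of_pos (by linarith)
      rw [h3] at this; exact this
    have := abs_le.mp habs
    nlinarith [hL, hμ₁, hM0]
  have hhM : 0 < h M := by
    have hMsq : L * M + M ≤ (M / α) ^ 2 := by
      rw [div_pow, le_div_iff₀ (by positivity : (0:ℝ) < α ^ 2)]
      nlinarith [hM0, hM1]
    simp only [hh]
    nlinarith
  -- first root in (0, μ₁)
  have hiv1 : (0 : ℝ) ∈ Set.Ioo (h μ₁) (h 0) := ⟨hhμ₁, hh0⟩
  obtain ⟨ν₁, hν₁mem, hν₁⟩ := intermediate_value_Ioo' hμ₁.le hcont.continuousOn hiv1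
  -- second root in (μ₁, M)
  have hiv2 : (0 : ℝ) ∈ Set.Ioo (h μ₁) (h M) := ⟨hhμ₁, hhM⟩
  obtain ⟨ν₂, hν₂mem, hν₂⟩ := intermediate_value_Ioo hMμ₁.le hcont.continuousOn hiv2
  refine ⟨ν₁, ν₂, hν₁mem.1, lt_trans hμ₁ hν₂mem.1, ne_of_lt (lt_trans hν₁mem.2 hν₂mem.1), ?_, ?_⟩
  · have : g ν₁ + (ν₁ / α) ^ 2 = 0 := hν₁
    linarith
  · have : g ν₂ + (ν₂ / α) ^ 2 = 0 := hν₂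
    linarith
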